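/- Let n ≥ 2 and equip ℝⁿ with the standard inner product ⟨·,·⟩. For a nonzero vector α ∈ ℝⁿ let s_α denote the orthogonal reflection s_α(x) = x − 2(⟨α, x⟩/⟨α, α⟩)·α. Let α, β ∈ ℝⁿ be nonzero vectors such that the composite s_α ∘ s_β has infinite order in the orthogonal group O(n). Then any n polynomials p₁, …, pₙ ∈ ℝ[x₁, …, xₙ] each of which is invariant under both s_α and s_β (i.e. pᵢ ∘ s_α = pᵢ and pᵢ ∘ s_β = pᵢ) are algebraically dependent over ℝ. -/

import Mathlib

/-- The standard inner product `⟨x, y⟩ = Σᵢ xᵢ yᵢ` on `ℝⁿ`. -/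
noncomputable def Br {n : ℕ} (x y : Fin n → ℝ) : ℝ := ∑ i, x i * y i

/-- The orthogonal reflection `s_α(x) = x − 2(⟨α,x⟩/⟨α,α⟩)·α`. -/
noncomputable def reflR {n : ℕ} (α : Fin n → ℝ) (x : Fin n → ℝ) : Fin n → ℝ :=
  x - (2 * Br α x / Br α α) • α

open MvPolynomial

-- basic lemmas about Br / reflR
lemma Br_add {n : ℕ} (γ x y : Fin n → ℝ) : Br γ (x + y) = Br γ x + Br γ y := by
  simp [Br, mul_add, Finset.sum_add_distrib]

lemma Br_smul {n : ℕ} (γ x : Fin n → ℝ) (c : ℝ) : Br γ (c • x) = c * Br γ x := by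
  simp only [Br, Pi.smul_apply, smul_eq_mul, Finset.mul_sum]
  exact Finset.sum_congr rfl fun i _ => by ring

lemma Br_self_pos {n : ℕ} {γ : Fin n → ℝ} (h : γ ≠ 0) : 0 < Br γ γ := by
  have : ∃ i, γ i ≠ 0 := by
    by_contra hc; push_neg at hc; exact h (funext hc)
  obtain ⟨i, hi⟩ := this
  have : (0:ℝ) < γ i * γ i := mul_self_pos.2 hi
  exact Finset.sum_pos' (fun j _ => mul_self_nonneg _) ⟨i, Finset.mem_univ i, this⟩

lemma Br_sub_smul {n : ℕ} (γ x : Fin n → ℝ) (c : ℝ) :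
    Br γ (x - c • γ) = Br γ x - c * Br γ γ := by
  have h : x - c • γ = x + (-c) • γ := by rw [neg_smul, ← sub_eq_add_neg]
  rw [h, Br_add, Br_smul]; ring

lemma reflR_invol {n : ℕ} {γ : Fin n → ℝ} (h : γ ≠ 0) (x : Fin n → ℝ) :
    reflR γ (reflR γ x) = x := by
  have hB := (Br_self_pos h).ne'
  simp only [reflR]
  rw [Br_sub_smul]
  have : 2 * (Br γ x - 2 * Br γ x / Br γ γ * Br γ γ) / Br γ γ = -(2 * Br γ x / Br γ γ) := by
    field_simp; ring
  rw [this, neg_smul, sub_neg_eq_add, sub_add_cancel]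

noncomputable def reflRL {n : ℕ} (γ : Fin n → ℝ) : (Fin n → ℝ) →ₗ[ℝ] (Fin n → ℝ) where
  toFun := reflR γ
  map_add' x y := by
    simp only [reflR, Br_add, mul_add]
    rw [add_div, add_smul]
    abel
  map_smul' c x := by
    simp only [reflR, Br_smul, RingHom.id_apply, smul_sub, smul_smul]
    congr 1
    rw [mul_div_assoc, mul_div_assoc]
    ring_nf

lemma iterate_eq_pow {n : ℕ} (α β : Fin n → ℝ) (m : ℕ) :
    (reflR α ∘ reflR β)^[m] = ⇑((reflRL α ∘ₗ reflRL β)^m) := by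
  induction m with
  | zero => rfl
  | succ k ih =>
    rw [Function.iterate_succ', pow_succ']
    ext x
    simp [ih]
    rfl

-- zero polynomial on open set
lemma zero_of_eval_zero_on_open {n : ℕ} {P : MvPolynomial (Fin n) ℝ}
    (U : Set (Fin n → ℝ)) (hU : IsOpen U) (hne : U.Nonempty)
    (h : ∀ x ∈ U, eval x P = 0) : P = 0 := by
  by_contra hP
  have hy : ∃ y, eval y P ≠ 0 := by
    by_contra hc; push_neg at hc
    exact hP (MvPolynomial.funext fun x => by simp [hc x])
  obtain ⟨y, hy⟩ := hy
  obtain ⟨a, ha⟩ := hne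
  obtain ⟨ε, hε, hball⟩ := Metric.isOpen_iff.1 hU a ha
  set Q : Polynomial ℝ :=
    MvPolynomial.aeval (fun i => Polynomial.C (a i) + Polynomial.C (y i - a i) * Polynomial.X) P
  have hQeval : ∀ t : ℝ, Q.eval t = eval (fun i => a i + (y i - a i) * t) P := by
    intro t
    show (Polynomial.evalRingHom t) (MvPolynomial.aeval _ P) = _
    rw [MvPolynomial.aeval_def, MvPolynomial.eval₂_comp_left (Polynomial.evalRingHom t)]
    rw [MvPolynomial.eval]
    congr 1
    · ext r; simp
    · funext i; simp
  have hQ1 : Q.eval 1 = eval y P := by rw [hQeval]; simp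
  set δ : ℝ := min 1 (ε / (‖y - a‖ + 1)) with hδdef
  have hδpos : 0 < δ := by
    apply lt_min one_pos
    positivity
  have hroots : ∀ t ∈ Set.Ioo (0:ℝ) δ, Q.IsRoot t := by
    intro t ht
    have hmem : (fun i => a i + (y i - a i) * t) ∈ U := by
      apply hball
      rw [Metric.mem_ball]
      have : (fun i => a i + (y i - a i) * t) - a = t • (y - a) := by
        funext i; simp [mul_comm]
      rw [dist_eq_norm, this, norm_smul]
      have ht0 : 0 < t := ht.1
      have htδ : t < δ := ht.2
      calc ‖t‖ * ‖y - a‖ ≤ δ * ‖y - a‖ := by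
            apply mul_le_mul_of_nonneg_right _ (norm_nonneg _)
            rw [Real.norm_eq_abs, abs_of_pos ht0]; exact le_of_lt htδ
        _ ≤ (ε / (‖y - a‖ + 1)) * ‖y - a‖ := by
            apply mul_le_mul_of_nonneg_right (min_le_right _ _) (norm_nonneg _)
        _ < ε := by
            rw [div_mul_eq_mul_div, div_lt_iff₀ (by positivity)]
            nlinarith [norm_nonneg (y - a)]
    rw [Polynomial.IsRoot, hQeval]
    exact h _ hmem
  have hQ0 : Q = 0 := by
    apply Polynomial.eq_zero_of_infinite_isRoot
    exact Set.Infinite.mono hroots (Set.Ioo_infinite hδpos)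
  rw [hQ0] at hQ1
  simp at hQ1
  exact hy hQ1.symm

lemma exists_avoid {n : ℕ} {ι : Type*} [Countable ι]
    (g : ι → MvPolynomial (Fin n) ℝ) (hg : ∀ k, g k ≠ 0) :
    ∃ a : Fin n → ℝ, ∀ k, eval a (g k) ≠ 0 := by
  by_contra hc; push_neg at hc
  have hcover : (⋃ k, {x : Fin n → ℝ | eval x (g k) = 0}) = Set.univ := by
    ext x; simp only [Set.mem_iUnion, Set.mem_univ, iff_true, Set.mem_setOf_eq]
    exact hc x
  obtain ⟨k, hk⟩ := nonempty_interior_of_iUnion_of_closed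
    (fun k => isClosed_eq (MvPolynomial.continuous_eval (g k)) continuous_const) hcover
  exact hg k (zero_of_eval_zero_on_open (interior {x : Fin n → ℝ | eval x (g k) = 0})
    isOpen_interior hk (fun x hx => interior_subset (s := {x : Fin n → ℝ | eval x (g k) = 0}) hx))

lemma totalDegree_aeval_le {n m : ℕ} (q : Fin m → MvPolynomial (Fin n) ℝ) (D : ℕ)
    (hq : ∀ i, (q i).totalDegree ≤ D) (F : MvPolynomial (Fin m) ℝ) :
    (aeval q F).totalDegree ≤ D * F.totalDegree := by
  rw [aeval_def, eval₂_eq]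
  apply (totalDegree_finset_sum _ _).trans
  apply Finset.sup_le
  intro d hd
  apply (totalDegree_mul _ _).trans
  have h1 : ((algebraMap ℝ (MvPolynomial (Fin n) ℝ)) (coeff d F)).totalDegree = 0 := by
    rw [algebraMap_eq, totalDegree_C]
  rw [h1, zero_add]
  apply (totalDegree_finset_prod _ _).trans
  calc ∑ i ∈ d.support, (q i ^ d i).totalDegree
      ≤ ∑ i ∈ d.support, d i * D := by
        apply Finset.sum_le_sum
        intro i _
        exact (totalDegree_pow _ _).trans (Nat.mul_le_mul_left _ (hq i))
    _ = (d.sum fun _ e => e) * D := by rw [Finsupp.sum, Finset.sum_mul]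
    _ ≤ F.totalDegree * D := Nat.mul_le_mul_right _ (le_totalDegree hd)
    _ = D * F.totalDegree := Nat.mul_comm _ _


lemma apply_le_of_sum_le {k K : ℕ} {d : Fin k →₀ ℕ} (hd : (d.sum fun _ e => e) ≤ K)
    (i : Fin k) : d i ≤ K := by
  rcases eq_or_ne (d i) 0 with h | h
  · omega
  · exact le_trans (Finset.single_le_sum (f := fun j => d j) (fun _ _ => Nat.zero_le _)
      (Finsupp.mem_support_iff.mpr h)) hd

lemma finite_sum_le (k K : ℕ) : Finite {d : Fin k →₀ ℕ | (d.sum fun _ e => e) ≤ K} := by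
  apply Finite.of_injective (f := fun d : {d : Fin k →₀ ℕ | (d.sum fun _ e => e) ≤ K} =>
    fun i => (⟨d.1 i, Nat.lt_succ_of_le (apply_le_of_sum_le d.2 i)⟩ : Fin (K + 1)))
  intro d e h
  apply Subtype.ext; apply Finsupp.ext; intro i
  exact congrArg Fin.val (congrFun h i)

lemma card_sum_le_le (k K : ℕ) [Fintype {d : Fin k →₀ ℕ | (d.sum fun _ e => e) ≤ K}] :
    Fintype.card {d : Fin k →₀ ℕ | (d.sum fun _ e => e) ≤ K} ≤ (K + 1) ^ k := by
  have h := Fintype.card_le_of_injective (f := fun d : {d : Fin k →₀ ℕ | (d.sum fun _ e => e) ≤ K} =>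
    fun i => (⟨d.1 i, Nat.lt_succ_of_le (apply_le_of_sum_le d.2 i)⟩ : Fin (K + 1))) ?_
  · simpa using h
  · intro d e h
    apply Subtype.ext; apply Finsupp.ext; intro i
    exact congrArg Fin.val (congrFun h i)

lemma le_card_sum_le (k M : ℕ) [Fintype {d : Fin k →₀ ℕ | (d.sum fun _ e => e) ≤ k * M}] :
    (M + 1) ^ k ≤ Fintype.card {d : Fin k →₀ ℕ | (d.sum fun _ e => e) ≤ k * M} := by
  have h := Fintype.card_le_of_injective
    (f := fun g : Fin k → Fin (M + 1) =>
      (⟨Finsupp.equivFunOnFinite.symm (fun i => (g i : ℕ)), by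
        show ((Finsupp.equivFunOnFinite.symm (fun i => (g i : ℕ))).sum fun _ e => e) ≤ k * M
        rw [Finsupp.sum_fintype _ _ (fun _ => rfl)]
        calc ∑ i, (Finsupp.equivFunOnFinite.symm (fun i => (g i : ℕ))) i
            = ∑ i : Fin k, (g i : ℕ) := by rfl
          _ ≤ ∑ _i : Fin k, M := Finset.sum_le_sum (fun i _ => Fin.is_le _)
          _ = k * M := by simp [Finset.sum_const, Finset.card_univ]⟩ :
        {d : Fin k →₀ ℕ | (d.sum fun _ e => e) ≤ k * M})) ?_
  · simpa only [Fintype.card_fun, Fintype.card_fin] using h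
  · intro g g' h
    funext i
    have := congrArg Subtype.val h
    have h2 := congrArg (fun d => Finsupp.equivFunOnFinite d i) this
    simp only [Equiv.apply_symm_apply] at h2
    exact Fin.ext h2

lemma dep {n : ℕ} (q : Fin (n + 1) → MvPolynomial (Fin n) ℝ) :
    ∃ F : MvPolynomial (Fin (n + 1)) ℝ, F ≠ 0 ∧ aeval q F = 0 := by
  by_contra hcon
  push_neg at hcon
  -- degree bound
  set D : ℕ := (Finset.univ.sup fun i => (q i).totalDegree) + 1 with hD
  have hD1 : 1 ≤ D := Nat.le_add_left _ _
  have hq : ∀ i, (q i).totalDegree ≤ D := by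
    intro i
    have h := Finset.le_sup (f := fun i => (q i).totalDegree) (Finset.mem_univ i)
    omega
  set C : ℕ := D * (n + 1) with hC
  have hC1 : 1 ≤ C := Nat.one_le_iff_ne_zero.2 (by positivity)
  set M : ℕ := C ^ n with hM
  have hM1 : 1 ≤ M := Nat.one_le_iff_ne_zero.2 (pow_ne_zero _ (by omega))
  set N : ℕ := (n + 1) * M with hN
  set K : ℕ := D * N with hK
  -- the injective linear map
  have hmem : ∀ F : restrictTotalDegree (Fin (n + 1)) ℝ N,
      aeval q (F : MvPolynomial (Fin (n + 1)) ℝ) ∈ restrictTotalDegree (Fin n) ℝ K := by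
    intro F
    rw [mem_restrictTotalDegree]
    calc (aeval q (F : MvPolynomial (Fin (n+1)) ℝ)).totalDegree
        ≤ D * (F : MvPolynomial (Fin (n+1)) ℝ).totalDegree := totalDegree_aeval_le q D hq _
      _ ≤ D * N := Nat.mul_le_mul_left _ ((mem_restrictTotalDegree _ _ _).1 F.2)
  set Φ : restrictTotalDegree (Fin (n + 1)) ℝ N →ₗ[ℝ] restrictTotalDegree (Fin n) ℝ K :=
    LinearMap.codRestrict _
      ((aeval q).toLinearMap.comp (Submodule.subtype _)) hmem with hΦ
  have hΦinj : Function.Injective Φ := by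
    intro F G hFG
    have h0 : aeval q ((F : MvPolynomial (Fin (n+1)) ℝ) - (G : MvPolynomial (Fin (n+1)) ℝ)) = 0 := by
      rw [map_sub, sub_eq_zero]
      exact congrArg Subtype.val hFG
    have : (F : MvPolynomial (Fin (n+1)) ℝ) - (G : MvPolynomial (Fin (n+1)) ℝ) = 0 := by
      by_contra hne
      exact hcon _ hne h0
    exact Subtype.ext (sub_eq_zero.1 this)
  -- finiteness and cards
  have hfin1 : Module.finrank ℝ (restrictTotalDegree (Fin (n+1)) ℝ N) ≤
      Module.finrank ℝ (restrictTotalDegree (Fin n) ℝ K) :=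
    LinearMap.finrank_le_finrank_of_injective hΦinj
  haveI i1 : Finite {d : Fin (n+1) →₀ ℕ | (d.sum fun _ e => e) ≤ N} := finite_sum_le _ _
  haveI i2 : Finite {d : Fin n →₀ ℕ | (d.sum fun _ e => e) ≤ K} := finite_sum_le _ _
  haveI j1 := Fintype.ofFinite {d : Fin (n+1) →₀ ℕ | (d.sum fun _ e => e) ≤ N}
  haveI j2 := Fintype.ofFinite {d : Fin n →₀ ℕ | (d.sum fun _ e => e) ≤ K}
  have e1 : Module.finrank ℝ (restrictTotalDegree (Fin (n+1)) ℝ N) =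
      Fintype.card {d : Fin (n+1) →₀ ℕ | (d.sum fun _ e => e) ≤ N} :=
    Module.finrank_eq_card_basis (basisRestrictSupport ℝ _)
  have e2 : Module.finrank ℝ (restrictTotalDegree (Fin n) ℝ K) =
      Fintype.card {d : Fin n →₀ ℕ | (d.sum fun _ e => e) ≤ K} :=
    Module.finrank_eq_card_basis (basisRestrictSupport ℝ _)
  have low : (M + 1) ^ (n + 1) ≤
      Fintype.card {d : Fin (n+1) →₀ ℕ | (d.sum fun _ e => e) ≤ N} := le_card_sum_le (n+1) M
  have high : Fintype.card {d : Fin n →₀ ℕ | (d.sum fun _ e => e) ≤ K} ≤ (K + 1) ^ n :=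
    card_sum_le_le n K
  have key : (M + 1) ^ (n + 1) ≤ (K + 1) ^ n := by
    calc (M + 1) ^ (n + 1) ≤ _ := low
      _ = _ := e1.symm
      _ ≤ _ := hfin1
      _ = _ := e2
      _ ≤ (K + 1) ^ n := high
  have hKC : K + 1 ≤ C * (M + 1) := by
    have h1 : K = C * M := by rw [hK, hN, hC]; ring
    have h2 : C * (M + 1) = C * M + C := by ring
    omega
  have final : (M + 1) ^ (n + 1) < (M + 1) ^ (n + 1) := by
    calc (M + 1) ^ (n + 1) ≤ (K + 1) ^ n := key
      _ ≤ (C * (M + 1)) ^ n := Nat.pow_le_pow_left hKC n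
      _ = C ^ n * (M + 1) ^ n := mul_pow _ _ _
      _ = M * (M + 1) ^ n := by rw [hM]
      _ < (M + 1) * (M + 1) ^ n :=
          mul_lt_mul_of_pos_right (Nat.lt_succ_self M) (by positivity)
      _ = (M + 1) ^ (n + 1) := by ring
  exact lt_irrefl _ final
lemma eval_aeval' {k n : ℕ} (q : Fin k → MvPolynomial (Fin n) ℝ) (b : Fin n → ℝ)
    (G : MvPolynomial (Fin k) ℝ) :
    eval b (aeval q G) = eval (fun i => eval b (q i)) G := by
  rw [aeval_def]
  rw [MvPolynomial.eval₂_comp_left (MvPolynomial.eval b)]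
  rw [MvPolynomial.eval]
  congr 1
  ext r
  simp

lemma eval_linpoly {n : ℕ} (T : (Fin n → ℝ) →ₗ[ℝ] (Fin n → ℝ)) (jm : Fin n) (x : Fin n → ℝ) :
    eval x ((∑ i, MvPolynomial.C (T (fun j => if i = j then 1 else 0) jm) * X i) - X jm)
      = T x jm - x jm := by
  have hTx : T x jm = ∑ i, x i * T (fun j => if i = j then 1 else 0) jm := by
    conv_lhs => rw [LinearMap.pi_apply_eq_sum_univ T x]
    rw [Finset.sum_apply]
    exact Finset.sum_congr rfl fun i _ => by simp
  simp only [map_sub, map_sum, eval_mul, eval_C, eval_X, hTx]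
  congr 1
  exact Finset.sum_congr rfl fun i _ => by ring

/-- Key step in the proof of Theorem 1.1: if the composite reflection `s_α ∘ s_β` has infinite
order, then any `n` polynomials invariant under both `s_α` and `s_β` are algebraically
dependent over `ℝ`. -/
theorem stmt19 {n : ℕ} (hn : 2 ≤ n) (α β : Fin n → ℝ) (hα : α ≠ 0) (hβ : β ≠ 0)
    (hinf : ∀ m : ℕ, 0 < m → (reflR α ∘ reflR β)^[m] ≠ id)
    (p : Fin n → MvPolynomial (Fin n) ℝ)
    (hpα : ∀ i : Fin n, ∀ x : Fin n → ℝ,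
      MvPolynomial.eval (reflR α x) (p i) = MvPolynomial.eval x (p i))
    (hpβ : ∀ i : Fin n, ∀ x : Fin n → ℝ,
      MvPolynomial.eval (reflR β x) (p i) = MvPolynomial.eval x (p i)) :
    ∃ F : MvPolynomial (Fin n) ℝ, F ≠ 0 ∧ MvPolynomial.aeval p F = 0 := by
  classical
  by_contra hcon
  push_neg at hcon
  have hindep : ∀ c : MvPolynomial (Fin n) ℝ, aeval p c = 0 → c = 0 := by
    intro c hc
    by_contra h
    exact hcon c h hc
  -- Step 1: per-coordinate algebraic relations
  have hGj : ∀ j : Fin n, ∃ (R : Polynomial (MvPolynomial (Fin n) ℝ)) (k : ℕ),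
      aeval p (R.coeff k) ≠ 0 ∧
      ∀ b : Fin n → ℝ,
        Polynomial.eval (b j) (R.map (eval (fun i => eval b (p i)))) = 0 := by
    intro j
    obtain ⟨G, hG0, hGe⟩ := dep (Fin.cons (X j) p)
    set R := MvPolynomial.finSuccEquiv ℝ n G with hR
    have hR0 : R ≠ 0 := by
      intro h
      exact hG0 ((MvPolynomial.finSuccEquiv ℝ n).injective (by rw [← hR, h, map_zero]))
    have hk : ∃ k, aeval p (R.coeff k) ≠ 0 := by
      by_contra hc; push_neg at hc
      apply hR0
      refine Polynomial.ext fun k => ?_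
      rw [Polynomial.coeff_zero]
      exact hindep _ (hc k)
    obtain ⟨k, hkne⟩ := hk
    refine ⟨R, k, hkne, ?_⟩
    intro b
    have h1 : eval b (aeval (Fin.cons (X j) p) G) = 0 := by rw [hGe]; simp
    rw [eval_aeval'] at h1
    have h2 : (fun i : Fin (n+1) => eval b ((Fin.cons (X j) p : Fin (n+1) → MvPolynomial (Fin n) ℝ) i)) =
        (Fin.cons (b j) (fun i => eval b (p i)) : Fin (n+1) → ℝ) := by
      have h3 := Fin.comp_cons (⇑(eval b)) (X j : MvPolynomial (Fin n) ℝ) p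
      simp only [Function.comp_def, eval_X] at h3
      exact h3
    rw [h2, MvPolynomial.eval_eq_eval_mv_eval'] at h1
    exact h1
  choose Rj kj hkj hroot using hGj
  -- Step 2: the avoidance family
  set L := reflRL α ∘ₗ reflRL β with hL
  have hqm : ∀ m : {m : ℕ // 0 < m}, ∃ (v : Fin n → ℝ) (jm : Fin n),
      (L ^ (m : ℕ)) v jm ≠ v jm := by
    intro m
    have hne := hinf m m.2
    rw [iterate_eq_pow] at hne
    by_contra hc; push_neg at hc
    exact hne (funext fun v => funext fun j => hc v j)
  choose vm jmm hvm using hqm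
  set gm : {m : ℕ // 0 < m} → MvPolynomial (Fin n) ℝ := fun m =>
    (∑ i, MvPolynomial.C
      ((L ^ m.1) (fun j => if i = j then 1 else 0) (jmm m)) * X i) - X (jmm m) with hgm
  set g : (Fin n ⊕ {m : ℕ // 0 < m}) → MvPolynomial (Fin n) ℝ :=
    Sum.elim (fun j => aeval p ((Rj j).coeff (kj j))) gm with hg
  have hgne : ∀ k, g k ≠ 0 := by
    rintro (j | m) h
    · exact hkj j h
    · have h2 := eval_linpoly (L ^ m.1) (jmm m) (vm m)
      rw [hg] at h
      simp only [Sum.elim_inr, hgm] at h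
      rw [h, map_zero] at h2
      exact hvm m (by linarith)
  obtain ⟨a, ha⟩ := exists_avoid g hgne
  -- Step 3: the fiber of a is finite
  set pt : Fin n → ℝ := fun i => eval a (p i) with hpt
  set ψ : Fin n → Polynomial ℝ := fun j => (Rj j).map (eval pt) with hψ
  have hψne : ∀ j, ψ j ≠ 0 := by
    intro j h
    apply ha (Sum.inl j)
    rw [hg]
    simp only [Sum.elim_inl]
    rw [eval_aeval']
    have hco : (ψ j).coeff (kj j) = eval pt ((Rj j).coeff (kj j)) := Polynomial.coeff_map _ _
    rw [h, Polynomial.coeff_zero] at hco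
    exact hco.symm
  have hBig : Set.Finite (Set.pi Set.univ fun j => {t : ℝ | (ψ j).IsRoot t}) :=
    Set.Finite.pi fun j => Polynomial.finite_setOf_isRoot (hψne j)
  -- Step 4: the orbit of a is infinite and contained in the fiber
  set f := reflR α ∘ reflR β with hf
  have hfinj : Function.Injective f := by
    have hli : Function.LeftInverse (reflR β ∘ reflR α) f := by
      intro x
      show reflR β (reflR α (reflR α (reflR β x))) = x
      rw [reflR_invol hα, reflR_invol hβ]
    exact hli.injective
  have hfixa : ∀ m : ℕ, 0 < m → f^[m] a ≠ a := by
    intro m hm hfix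
    apply ha (Sum.inr ⟨m, hm⟩)
    rw [hg]
    simp only [Sum.elim_inr, hgm]
    rw [eval_linpoly]
    have h3 : (L ^ m) a = a := by
      have := congrFun (iterate_eq_pow α β m) a
      rw [hL]
      rw [← this]
      exact hfix
    rw [h3, sub_self]
  have hoinj : Function.Injective (fun m : ℕ => f^[m] a) := by
    intro k l hkl
    simp only at hkl
    by_contra hne
    rcases Nat.lt_or_ge k l with h | h
    · have h1 : f^[k] (f^[l - k] a) = f^[k] a := by
        rw [← Function.iterate_add_apply, Nat.add_sub_cancel' (le_of_lt h)]
        exact hkl.symm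
      exact hfixa (l - k) (by omega) ((hfinj.iterate k) h1)
    · have h' : l < k := by omega
      have h1 : f^[l] (f^[k - l] a) = f^[l] a := by
        rw [← Function.iterate_add_apply, Nat.add_sub_cancel' (le_of_lt h')]
        exact hkl
      exact hfixa (k - l) (by omega) ((hfinj.iterate l) h1)
  have hOrbInf : (Set.range fun m : ℕ => f^[m] a).Infinite :=
    Set.infinite_range_of_injective hoinj
  have hfib : ∀ m i, eval (f^[m] a) (p i) = eval a (p i) := by
    intro m
    induction m with
    | zero => simp
    | succ k ih =>
      intro i
      rw [Function.iterate_succ_apply']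
      show eval (reflR α (reflR β (f^[k] a))) (p i) = _
      rw [hpα, hpβ, ih i]
  have hsub : (Set.range fun m : ℕ => f^[m] a) ⊆
      Set.pi Set.univ fun j => {t : ℝ | (ψ j).IsRoot t} := by
    rintro b ⟨m, rfl⟩
    intro j _
    have h0 := hroot j (f^[m] a)
    have hptb : (fun i => eval (f^[m] a) (p i)) = pt := funext fun i => hfib m i
    rw [hptb] at h0
    exact h0
  exact hOrbInf (hBig.subset hsub)
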